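/- Comonotonic aggregation identity. Assume overlap and 0 < c̲ ≤ p₁ ≤ c̄ < 1. Then for all (y₁, y₀) ∈ ℝ²: p₁·min{G₁(y₁), F̲₀¹(y₀)} + p₀·min{F̄₁⁰(y₁), G₀(y₀)} = min{F̄₁(y₁), F̲₀(y₀)}, and p₁·min{G₁(y₁), F̄₀¹(y₀)} + p₀·min{F̲₁⁰(y₁), G₀(y₀)} = min{F̲₁(y₁), F̄₀(y₀)}. -/

import Mathlib

open MeasureTheory ProbabilityTheory Set Filter Function

noncomputable section


lemma agg_key (A B u v : ℝ) (h : B < u ↔ v < A) :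
    min A v + min u B = min (A + u) (B + v) := by
  rcases le_or_gt u B with hu | hu
  · have hv : A ≤ v := by
      by_contra hc
      push_neg at hc
      exact absurd (h.mpr hc) (not_lt.mpr hu)
    rw [min_eq_left hv, min_eq_left hu, min_eq_left (by linarith)]
  · have hv : v < A := h.mp hu
    rw [min_eq_right hv.le, min_eq_right hu.le, min_eq_right (by linarith)]
    ring

lemma alg1 (g1 g0 p1 p0 cl cu : ℝ) (hp1 : 0 < p1) (hp0 : 0 < p0)
    (hcl : 0 < cl) (hcu : 0 < cu) (h1cl : 0 < 1 - cl) (h1cu : 0 < 1 - cu) :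
    p1 * min g1 (max (g0 * p0 * cl / (p1 * (1 - cl)))
        ((p1 - cu) / ((1 - cu) * p1) + g0 * p0 * cu / (p1 * (1 - cu)))) +
      p0 * min (min (g1 * p1 * (1 - cl) / (p0 * cl))
        ((cu - p1) / (cu * p0) + g1 * p1 * (1 - cu) / (p0 * cu))) g0 =
    min (min (g1 * p1 / cl) ((cu - p1) / cu + g1 * p1 / cu))
      (max (g0 * p0 / (1 - cl)) ((p1 - cu) / (1 - cu) + g0 * p0 / (1 - cu))) := by
  have hclne := hcl.ne'
  have hcune := hcu.ne'
  have h1clne := h1cl.ne'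
  have h1cune := h1cu.ne'
  have hp1ne := hp1.ne'
  have hp0ne := hp0.ne'
  have e1 : p1 * min g1 (max (g0 * p0 * cl / (p1 * (1 - cl)))
      ((p1 - cu) / ((1 - cu) * p1) + g0 * p0 * cu / (p1 * (1 - cu)))) =
      min (g1 * p1) (max (g0 * p0 * cl / (1 - cl))
        ((p1 - cu) / (1 - cu) + g0 * p0 * cu / (1 - cu))) := by
    rw [mul_min_of_nonneg _ _ hp1.le, mul_max_of_nonneg _ _ hp1.le]
    congr 1
    · ring
    congr 1
    · field_simp
    · field_simp
  have e2 : p0 * min (min (g1 * p1 * (1 - cl) / (p0 * cl))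
      ((cu - p1) / (cu * p0) + g1 * p1 * (1 - cu) / (p0 * cu))) g0 =
      min (min (g1 * p1 * (1 - cl) / cl)
        ((cu - p1) / cu + g1 * p1 * (1 - cu) / cu)) (g0 * p0) := by
    rw [mul_min_of_nonneg _ _ hp0.le, mul_min_of_nonneg _ _ hp0.le]
    congr 1
    · congr 1
      · field_simp
      · field_simp
    · ring
  have e3 : min (g1 * p1 / cl) ((cu - p1) / cu + g1 * p1 / cu) =
      g1 * p1 + min (g1 * p1 * (1 - cl) / cl)
        ((cu - p1) / cu + g1 * p1 * (1 - cu) / cu) := by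
    rw [← min_add_add_left]
    congr 1
    · field_simp
      ring
    · field_simp
      ring
  have e4 : max (g0 * p0 / (1 - cl)) ((p1 - cu) / (1 - cu) + g0 * p0 / (1 - cu)) =
      g0 * p0 + max (g0 * p0 * cl / (1 - cl))
        ((p1 - cu) / (1 - cu) + g0 * p0 * cu / (1 - cu)) := by
    rw [← max_add_add_left]
    congr 1
    · field_simp
      ring
    · field_simp
      ring
  have hiff1 : g0 * p0 < g1 * p1 * (1 - cl) / cl ↔
      g0 * p0 * cl / (1 - cl) < g1 * p1 := by
    rw [lt_div_iff₀ hcl, div_lt_iff₀ h1cl]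
  have hiff2 : g0 * p0 < (cu - p1) / cu + g1 * p1 * (1 - cu) / cu ↔
      (p1 - cu) / (1 - cu) + g0 * p0 * cu / (1 - cu) < g1 * p1 := by
    rw [← add_div, ← add_div, lt_div_iff₀ hcu, div_lt_iff₀ h1cu]
    constructor <;> intro h <;> linarith
  have hiff : g0 * p0 < min (g1 * p1 * (1 - cl) / cl)
      ((cu - p1) / cu + g1 * p1 * (1 - cu) / cu) ↔
      max (g0 * p0 * cl / (1 - cl))
        ((p1 - cu) / (1 - cu) + g0 * p0 * cu / (1 - cu)) < g1 * p1 := by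
    rw [lt_min_iff, max_lt_iff, hiff1, hiff2]
  rw [e1, e2, e3, e4]
  exact agg_key _ _ _ _ hiff

lemma alg2 (g1 g0 p1 p0 cl cu : ℝ) (hp1 : 0 < p1) (hp0 : 0 < p0)
    (hcl : 0 < cl) (hcu : 0 < cu) (h1cl : 0 < 1 - cl) (h1cu : 0 < 1 - cu) :
    p1 * min g1 (min (g0 * p0 * cu / (p1 * (1 - cu)))
        ((p1 - cl) / ((1 - cl) * p1) + g0 * p0 * cl / (p1 * (1 - cl)))) +
      p0 * min (max (g1 * p1 * (1 - cu) / (p0 * cu))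
        ((cl - p1) / (cl * p0) + g1 * p1 * (1 - cl) / (p0 * cl))) g0 =
    min (max (g1 * p1 / cu) ((cl - p1) / cl + g1 * p1 / cl))
      (min (g0 * p0 / (1 - cu)) ((p1 - cl) / (1 - cl) + g0 * p0 / (1 - cl))) := by
  have hclne := hcl.ne'
  have hcune := hcu.ne'
  have h1clne := h1cl.ne'
  have h1cune := h1cu.ne'
  have hp1ne := hp1.ne'
  have hp0ne := hp0.ne'
  have e1 : p1 * min g1 (min (g0 * p0 * cu / (p1 * (1 - cu)))
      ((p1 - cl) / ((1 - cl) * p1) + g0 * p0 * cl / (p1 * (1 - cl)))) =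
      min (g1 * p1) (min (g0 * p0 * cu / (1 - cu))
        ((p1 - cl) / (1 - cl) + g0 * p0 * cl / (1 - cl))) := by
    rw [mul_min_of_nonneg _ _ hp1.le, mul_min_of_nonneg _ _ hp1.le]
    congr 1
    · ring
    congr 1
    · field_simp
    · field_simp
  have e2 : p0 * min (max (g1 * p1 * (1 - cu) / (p0 * cu))
      ((cl - p1) / (cl * p0) + g1 * p1 * (1 - cl) / (p0 * cl))) g0 =
      min (max (g1 * p1 * (1 - cu) / cu)
        ((cl - p1) / cl + g1 * p1 * (1 - cl) / cl)) (g0 * p0) := by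
    rw [mul_min_of_nonneg _ _ hp0.le, mul_max_of_nonneg _ _ hp0.le]
    congr 1
    · congr 1
      · field_simp
      · field_simp
    · ring
  have e3 : max (g1 * p1 / cu) ((cl - p1) / cl + g1 * p1 / cl) =
      g1 * p1 + max (g1 * p1 * (1 - cu) / cu)
        ((cl - p1) / cl + g1 * p1 * (1 - cl) / cl) := by
    rw [← max_add_add_left]
    congr 1
    · field_simp
      ring
    · field_simp
      ring
  have e4 : min (g0 * p0 / (1 - cu)) ((p1 - cl) / (1 - cl) + g0 * p0 / (1 - cl)) =
      g0 * p0 + min (g0 * p0 * cu / (1 - cu))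
        ((p1 - cl) / (1 - cl) + g0 * p0 * cl / (1 - cl)) := by
    rw [← min_add_add_left]
    congr 1
    · field_simp
      ring
    · field_simp
      ring
  have hiff1 : g0 * p0 < g1 * p1 * (1 - cu) / cu ↔
      g0 * p0 * cu / (1 - cu) < g1 * p1 := by
    rw [lt_div_iff₀ hcu, div_lt_iff₀ h1cu]
  have hiff2 : g0 * p0 < (cl - p1) / cl + g1 * p1 * (1 - cl) / cl ↔
      (p1 - cl) / (1 - cl) + g0 * p0 * cl / (1 - cl) < g1 * p1 := by
    rw [← add_div, ← add_div, lt_div_iff₀ hcl, div_lt_iff₀ h1cl]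
    constructor <;> intro h <;> linarith
  have hiff : g0 * p0 < max (g1 * p1 * (1 - cu) / cu)
      ((cl - p1) / cl + g1 * p1 * (1 - cl) / cl) ↔
      min (g0 * p0 * cu / (1 - cu))
        ((p1 - cl) / (1 - cl) + g0 * p0 * cl / (1 - cl)) < g1 * p1 := by
    rw [lt_max_iff, min_lt_iff, hiff1, hiff2]
  rw [e1, e2, e3, e4]
  exact agg_key _ _ _ _ hiff

/-- **Comonotonic aggregation identity.**
Under overlap and `0 < c̲ ≤ p₁ ≤ c̄ < 1`, for all `(y₁, y₀)`:
`p₁·min{G₁(y₁), F̲₀¹(y₀)} + p₀·min{F̄₁⁰(y₁), G₀(y₀)} = min{F̄₁(y₁), F̲₀(y₀)}` and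
`p₁·min{G₁(y₁), F̄₀¹(y₀)} + p₀·min{F̲₁⁰(y₁), G₀(y₀)} = min{F̲₁(y₁), F̄₀(y₀)}`. -/
theorem comonotonic_aggregation_identity
    {Ω : Type*} [MeasurableSpace Ω] (P : Measure Ω) [IsProbabilityMeasure P]
    (Y1 Y0 : Ω → ℝ) (X : Ω → Bool)
    (hY1 : Measurable Y1) (hY0 : Measurable Y0) (hX : Measurable X)
    (Y : Ω → ℝ) (hY : ∀ ω, Y ω = if X ω then Y1 ω else Y0 ω)
    (p1 p0 : ℝ) (hp1 : p1 = (P {ω | X ω = true}).toReal) (hp0 : p0 = 1 - p1)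
    (hov : 0 < p1 ∧ p1 < 1)
    (cl cu : ℝ) (hcl : 0 < cl) (hclp1 : cl ≤ p1) (hp1cu : p1 ≤ cu) (hcu : cu < 1)
    (G1 G0 : ℝ → ℝ)
    (hG1 : ∀ y, G1 y = (P {ω | Y ω ≤ y ∧ X ω = true}).toReal / p1)
    (hG0 : ∀ y, G0 y = (P {ω | Y ω ≤ y ∧ X ω = false}).toReal / p0)
    (Fu1 Fl1 Fu0 Fl0 : ℝ → ℝ)
    (hFu1 : ∀ y, Fu1 y = min (G1 y * p1 / cl) ((cu - p1) / cu + G1 y * p1 / cu))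
    (hFl1 : ∀ y, Fl1 y = max (G1 y * p1 / cu) ((cl - p1) / cl + G1 y * p1 / cl))
    (hFu0 : ∀ y, Fu0 y = min (G0 y * p0 / (1 - cu)) ((p1 - cl) / (1 - cl) + G0 y * p0 / (1 - cl)))
    (hFl0 : ∀ y, Fl0 y = max (G0 y * p0 / (1 - cl)) ((p1 - cu) / (1 - cu) + G0 y * p0 / (1 - cu)))
    (Fu10 Fl10 Fu01 Fl01 : ℝ → ℝ)
    (hFu10 : ∀ y, Fu10 y = min (G1 y * p1 * (1 - cl) / (p0 * cl))
      ((cu - p1) / (cu * p0) + G1 y * p1 * (1 - cu) / (p0 * cu)))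
    (hFl10 : ∀ y, Fl10 y = max (G1 y * p1 * (1 - cu) / (p0 * cu))
      ((cl - p1) / (cl * p0) + G1 y * p1 * (1 - cl) / (p0 * cl)))
    (hFu01 : ∀ y, Fu01 y = min (G0 y * p0 * cu / (p1 * (1 - cu)))
      ((p1 - cl) / ((1 - cl) * p1) + G0 y * p0 * cl / (p1 * (1 - cl))))
    (hFl01 : ∀ y, Fl01 y = max (G0 y * p0 * cl / (p1 * (1 - cl)))
      ((p1 - cu) / ((1 - cu) * p1) + G0 y * p0 * cu / (p1 * (1 - cu)))) :
    ∀ y1 y0 : ℝ,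
      p1 * min (G1 y1) (Fl01 y0) + p0 * min (Fu10 y1) (G0 y0) = min (Fu1 y1) (Fl0 y0) ∧
      p1 * min (G1 y1) (Fu01 y0) + p0 * min (Fl10 y1) (G0 y0) = min (Fl1 y1) (Fu0 y0) := by
  obtain ⟨hp1pos, hp1lt⟩ := hov
  have hp0pos : 0 < p0 := by rw [hp0]; linarith
  have hcu0 : 0 < cu := lt_of_lt_of_le hcl (le_trans hclp1 hp1cu)
  have h1cl : 0 < 1 - cl := by linarith
  have h1cu : 0 < 1 - cu := by linarith
  intro y1 y0
  refine ⟨?_, ?_⟩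
  · rw [hFl01, hFu10, hFu1, hFl0]
    exact alg1 (G1 y1) (G0 y0) p1 p0 cl cu hp1pos hp0pos hcl hcu0 h1cl h1cu
  · rw [hFu01, hFl10, hFl1, hFu0]
    exact alg2 (G1 y1) (G0 y0) p1 p0 cl cu hp1pos hp0pos hcl hcu0 h1cl h1cu
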